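/- Let p be the smallest odd prime divisor of a positive integer n that is not a power of 2, and suppose E_0(n) = (p·2^{n/p}/(4n))(1 + o(1)) and, for n = pqr with q the second smallest odd prime divisor and r = n/(pq) → ∞, E_1(n) ≥ (2^r(2^{p−1}−1)(2^{(q−1)(r−1)}−1) − 2^{(2pq+(r−2)q)/3})/(4pq). Then E_1(n)/E_0(n) > (r(2^{p−1}−1)/(p·2^{q−1}))(1 + o(1)) as r → ∞; in particular E_1(n) > E_0(n) once r > c·p·2^{q−p} for a suitable absolute constant c. -/

import Mathlib

open Filter Topology

/-- Given the asymptotic formula for `E₀` and the lower bound for `E₁`,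
the ratio `E₁/E₀` exceeds `(r(2^(p-1)-1)/(p·2^(q-1)))(1+o(1))` as `r → ∞`; in
particular `E₁(n) > E₀(n)` once `r > c·p·2^(q-p)` for a suitable constant `c`. -/
theorem stmt19 (p q : ℕ) (hp : p.Prime) (hq : q.Prime) (hp2 : p ≠ 2) (hq2 : q ≠ 2)
    (hpq : p < q) (E0 E1 : ℕ → ℕ)
    (hE0 : ∃ e0 : ℕ → ℝ, Tendsto e0 atTop (nhds 0) ∧ ∀ r : ℕ, 2 ≤ r →
      (E0 (p * q * r) : ℝ)
        = ((p : ℝ) * 2 ^ (q * r) / (4 * (p * q * r))) * (1 + e0 r))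
    (hE1 : ∀ r : ℕ, 2 ≤ r →
      (E1 (p * q * r) : ℝ) ≥ ((2 : ℝ) ^ r * (2 ^ (p - 1) - 1) * (2 ^ ((q - 1) * (r - 1)) - 1)
        - (2 : ℝ) ^ (((2 * p * q + (r - 2) * q : ℕ) : ℝ) / 3)) / (4 * (p * q))) :
    (∃ e : ℕ → ℝ, Tendsto e atTop (nhds 0) ∧ ∀ᶠ r : ℕ in atTop,
      (E1 (p * q * r) : ℝ) / E0 (p * q * r)
        > ((r : ℝ) * (2 ^ (p - 1) - 1) / (p * 2 ^ (q - 1))) * (1 + e r)) ∧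
    (∃ cc : ℝ, 0 < cc ∧ ∀ r : ℕ, 2 ≤ r → (r : ℝ) > cc * p * 2 ^ (q - p) →
      E0 (p * q * r) < E1 (p * q * r)) := by
  obtain ⟨e0, he0, hf0⟩ := hE0
  have hp3 : 3 ≤ p := by have := hp.two_le; omega
  have hq5 : 5 ≤ q := by
    have h2 := hq.two_le
    have h4 : q ≠ 4 := by rintro rfl; norm_num at hq
    omega
  have hM3 : (3 : ℝ) ≤ 2 ^ (p - 1) - 1 := by
    have h : (2 : ℝ) ^ 2 ≤ 2 ^ (p - 1) := pow_le_pow_right₀ one_le_two (by omega)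
    norm_num at h; linarith
  set M : ℝ := 2 ^ (p - 1) - 1 with hMdef
  have hM0 : (0 : ℝ) < M := by linarith
  have hp0 : (0 : ℝ) < (p : ℝ) := by exact_mod_cast hp.pos
  have hq0 : (0 : ℝ) < (q : ℝ) := by exact_mod_cast hq.pos
  -- the error function
  set e : ℕ → ℝ := fun r =>
    (1 - (2 : ℝ) ^ r / 2 ^ (r + (q - 1) * (r - 1))
        - (2 : ℝ) ^ (((2 * p * q + (r - 2) * q : ℕ) : ℝ) / 3)
            / (M * 2 ^ (r + (q - 1) * (r - 1)))) / (1 + e0 r) - 1 - 1 / (r : ℝ)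
    with hedef
  -- first small limit
  have hu : Tendsto (fun r : ℕ => (2 : ℝ) ^ r / 2 ^ (r + (q - 1) * (r - 1))) atTop (nhds 0) := by
    apply squeeze_zero' (g := fun r : ℕ => (1 / 2 : ℝ) ^ r)
    · filter_upwards with r; positivity
    · filter_upwards [eventually_ge_atTop 2] with r hr
      have h2r : 2 * r ≤ r + (q - 1) * (r - 1) := by
        have h1 : 4 * (r - 1) ≤ (q - 1) * (r - 1) := Nat.mul_le_mul_right _ (by omega)
        omega
      calc (2 : ℝ) ^ r / 2 ^ (r + (q - 1) * (r - 1)) ≤ 2 ^ r / 2 ^ (2 * r) := by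
            gcongr <;> norm_num
        _ = (1 / 2 : ℝ) ^ r := by
            rw [two_mul, pow_add, div_pow, one_pow]
            field_simp
    · exact tendsto_pow_atTop_nhds_zero_of_lt_one (by norm_num) (by norm_num)
  -- second small limit
  have hv : Tendsto (fun r : ℕ => (2 : ℝ) ^ (((2 * p * q + (r - 2) * q : ℕ) : ℝ) / 3)
      / (M * 2 ^ (r + (q - 1) * (r - 1)))) atTop (nhds 0) := by
    apply squeeze_zero' (g := fun r : ℕ => (1 / 2 : ℝ) ^ r)
    · filter_upwards with r; positivity
    · filter_upwards [eventually_ge_atTop (2 * q)] with r hr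
      have hr2 : 2 ≤ r := by omega
      have hnat : (2 * p * q + (r - 2) * q : ℕ) ≤ 3 * ((q - 1) * (r - 1)) := by
        zify [show 2 ≤ r by omega, show 1 ≤ r by omega, show 1 ≤ q by omega]
        have hp' : (p : ℤ) ≤ (q : ℤ) - 1 := by omega
        have hr' : (2 * q : ℤ) ≤ (r : ℤ) := by omega
        have hq' : (5 : ℤ) ≤ (q : ℤ) := by omega
        nlinarith [mul_nonneg (sub_nonneg.2 hr') (by linarith : (0:ℤ) ≤ 2 * (q:ℤ) - 3),
          mul_nonneg (sub_nonneg.2 hp') (by linarith : (0:ℤ) ≤ (q:ℤ))]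
      have hexp : ((2 * p * q + (r - 2) * q : ℕ) : ℝ) / 3 ≤ (((q - 1) * (r - 1) : ℕ) : ℝ) := by
        rw [div_le_iff₀ (by norm_num : (0:ℝ) < 3)]
        calc ((2 * p * q + (r - 2) * q : ℕ) : ℝ) ≤ ((3 * ((q - 1) * (r - 1)) : ℕ) : ℝ) := by
              exact_mod_cast hnat
          _ = (((q - 1) * (r - 1) : ℕ) : ℝ) * 3 := by push_cast; ring
      have h1 : (2 : ℝ) ^ (((2 * p * q + (r - 2) * q : ℕ) : ℝ) / 3)
          ≤ 2 ^ ((q - 1) * (r - 1)) := by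
        rw [← Real.rpow_natCast 2 ((q - 1) * (r - 1))]
        exact Real.rpow_le_rpow_of_exponent_le one_le_two hexp
      calc (2 : ℝ) ^ (((2 * p * q + (r - 2) * q : ℕ) : ℝ) / 3)
            / (M * 2 ^ (r + (q - 1) * (r - 1)))
          ≤ (2 : ℝ) ^ ((q - 1) * (r - 1)) / (1 * 2 ^ (r + (q - 1) * (r - 1))) := by
            gcongr
            · linarith
        _ = (1 / 2 : ℝ) ^ r := by
            rw [one_mul, pow_add, div_pow, one_pow]
            field_simp
    · exact tendsto_pow_atTop_nhds_zero_of_lt_one (by norm_num) (by norm_num)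
  -- e tends to 0
  have hs : Tendsto (fun r : ℕ => 1 - (2 : ℝ) ^ r / 2 ^ (r + (q - 1) * (r - 1))
      - (2 : ℝ) ^ (((2 * p * q + (r - 2) * q : ℕ) : ℝ) / 3)
        / (M * 2 ^ (r + (q - 1) * (r - 1)))) atTop (nhds 1) := by
    have := (tendsto_const_nhds (x := (1:ℝ)) (f := atTop (α := ℕ))).sub hu |>.sub hv
    simpa using this
  have h1e : Tendsto (fun r : ℕ => 1 + e0 r) atTop (nhds 1) := by
    have := (tendsto_const_nhds (x := (1:ℝ)) (f := atTop (α := ℕ))).add he0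
    simpa using this
  have hinv : Tendsto (fun r : ℕ => 1 / (r : ℝ)) atTop (nhds 0) :=
    tendsto_one_div_atTop_nhds_zero_nat
  have he : Tendsto e atTop (nhds 0) := by
    rw [hedef]
    have := ((hs.div h1e one_ne_zero).sub
      (tendsto_const_nhds (x := (1:ℝ)) (f := atTop (α := ℕ)))).sub hinv
    simpa using this
  -- T(1+e) tends to infinity
  have hT : Tendsto (fun r : ℕ => (r : ℝ) * M / ((p : ℝ) * 2 ^ (q - 1)) * (1 + e r))
      atTop atTop := by
    have h1 : Tendsto (fun r : ℕ => (r : ℝ) * (M / ((p : ℝ) * 2 ^ (q - 1)))) atTop atTop :=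
      Tendsto.atTop_mul_const (by positivity) tendsto_natCast_atTop_atTop
    have h1' : Tendsto (fun r : ℕ => (r : ℝ) * M / ((p : ℝ) * 2 ^ (q - 1))) atTop atTop := by
      simpa [mul_div_assoc] using h1
    have h2 : Tendsto (fun r : ℕ => 1 + e r) atTop (nhds 1) := by
      simpa using (tendsto_const_nhds (x := (1:ℝ)) (f := atTop (α := ℕ))).add he
    exact h1'.atTop_mul_pos one_pos h2
  have habs : Tendsto (fun r : ℕ => |e0 r|) atTop (nhds 0) := by simpa using he0.abs
  -- the main eventual statement
  have hmain : ∀ᶠ r : ℕ in atTop,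
      ((E1 (p * q * r) : ℝ) / E0 (p * q * r)
        > (r : ℝ) * M / ((p : ℝ) * 2 ^ (q - 1)) * (1 + e r)) ∧
      E0 (p * q * r) < E1 (p * q * r) := by
    filter_upwards [eventually_ge_atTop 2, habs.eventually_lt_const (by norm_num : (0:ℝ) < 1/2),
      hT.eventually_gt_atTop 1] with r hr2 hab hT1
    have hre : (0 : ℝ) < (r : ℝ) := by exact_mod_cast (by omega : 0 < r)
    have h1e0 : (0 : ℝ) < 1 + e0 r := by
      have := abs_lt.mp hab; linarith [this.1]
    have hGeq := hf0 r hr2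
    set G := (E0 (p * q * r) : ℝ) with hGdef
    have hGpos : 0 < G := by
      rw [hGeq]
      apply mul_pos _ h1e0
      positivity
    have hL := hE1 r hr2
    set w := (2 : ℝ) ^ (((2 * p * q + (r - 2) * q : ℕ) : ℝ) / 3) with hw
    have hqr : q * r = (r + (q - 1) * (r - 1)) + (q - 1) := by
      obtain ⟨s, rfl⟩ := Nat.exists_eq_add_of_le hr2
      obtain ⟨t, hqt⟩ : ∃ t, q = 5 + t := ⟨q - 5, by omega⟩
      subst hqt
      have h1 : (5 + t) - 1 = 4 + t := by omega
      have h2 : (2 + s) - 1 = 1 + s := by omega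
      rw [h1, h2]
      ring
    have hne1 : (2 : ℝ) ^ (q - 1) ≠ 0 := by positivity
    have hne2 : (2 : ℝ) ^ r ≠ 0 := by positivity
    have hne3 : (2 : ℝ) ^ ((q - 1) * (r - 1)) ≠ 0 := by positivity
    have hid : (r : ℝ) * M / ((p : ℝ) * 2 ^ (q - 1)) * (1 + e r) * G
        = ((2 : ℝ) ^ r * M * ((2 : ℝ) ^ ((q - 1) * (r - 1)) - 1) - w) / (4 * ((p : ℝ) * q))
          - ((r : ℝ) * M / ((p : ℝ) * 2 ^ (q - 1))) * G / r := by
      rw [hGeq, hedef]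
      simp only
      rw [hqr]
      simp only [pow_add]
      rw [← hw]
      field_simp
      ring
    have hTpos : (0 : ℝ) < (r : ℝ) * M / ((p : ℝ) * 2 ^ (q - 1)) :=
      div_pos (mul_pos hre hM0) (by positivity)
    have hlt : (r : ℝ) * M / ((p : ℝ) * 2 ^ (q - 1)) * (1 + e r) * G < (E1 (p * q * r) : ℝ) := by
      rw [hid]
      have hpos : 0 < ((r : ℝ) * M / ((p : ℝ) * 2 ^ (q - 1))) * G / r :=
        div_pos (mul_pos hTpos hGpos) hre
      have : ((2 : ℝ) ^ r * M * ((2 : ℝ) ^ ((q - 1) * (r - 1)) - 1) - w) / (4 * ((p : ℝ) * q))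
          ≤ (E1 (p * q * r) : ℝ) := hL
      linarith
    have hratio : (E1 (p * q * r) : ℝ) / G
        > (r : ℝ) * M / ((p : ℝ) * 2 ^ (q - 1)) * (1 + e r) := (lt_div_iff₀ hGpos).mpr hlt
    refine ⟨hratio, ?_⟩
    have hgt1 : (1 : ℝ) < (E1 (p * q * r) : ℝ) / G := lt_trans hT1 hratio
    have : G < (E1 (p * q * r) : ℝ) := (one_lt_div hGpos).mp hgt1
    rw [hGdef] at this
    exact_mod_cast this
  constructor
  · exact ⟨e, he, by filter_upwards [hmain] with r hr using hr.1⟩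
  · obtain ⟨N, hN⟩ := eventually_atTop.mp hmain
    have hden : (0 : ℝ) < (p : ℝ) * 2 ^ (q - p) := by positivity
    refine ⟨((N : ℝ) + 1) / ((p : ℝ) * 2 ^ (q - p)), by positivity, ?_⟩
    intro r hr2 hrgt
    have hcc : ((N : ℝ) + 1) / ((p : ℝ) * 2 ^ (q - p)) * (p : ℝ) * 2 ^ (q - p)
        = (N : ℝ) + 1 := by
      field_simp
    rw [hcc] at hrgt
    have hrN : N ≤ r := by
      have h1 : (N : ℝ) < (r : ℝ) := by linarith
      exact_mod_cast h1.le
    exact (hN r hrN).2
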